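/- Let $K$ be a field whose characteristic is $0$ or greater than $n$, and let $A, B \in M_n(K)$ be such that $AB - BA = f(A)$ for some polynomial $f$ with coefficients in $K$. Then $A$ and $B$ are simultaneously triangularizable over the algebraic closure $\overline{K}$. -/

import Mathlib

open Polynomial

open Polynomial

section CommLemmas

variable {F R : Type*} [Field F] [Ring R] [Algebra F R]

lemma commute_aeval' (A : R) (p q : F[X]) : Commute (aeval A p) (aeval A q) := by
  unfold Commute SemiconjBy
  rw [← map_mul, ← map_mul, mul_comm]

lemma pow_comm_aux (A B : R) (f : F[X]) (h : A * B - B * A = aeval A f) (k : ℕ) :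
    A ^ (k + 1) * B - B * A ^ (k + 1) = ((k : F) + 1) • (A ^ k * aeval A f) := by
  induction k with
  | zero => simpa using h
  | succ k ih =>
    have hAB : A * B = B * A + aeval A f := by rw [← h]; abel
    have ih' : A ^ (k + 1) * B = B * A ^ (k + 1) + ((k : F) + 1) • (A ^ k * aeval A f) := by
      rw [← ih]; abel
    have hCA : aeval A f * A ^ (k+1) = A ^ (k+1) * aeval A f := by
      have := commute_aeval' A f (X ^ (k+1))
      simpa [map_pow] using this.eq
    have key : A ^ (k + 1 + 1) * B
        = B * A ^ (k+1+1) + A ^ (k+1) * aeval A f + ((k:F)+1) • (A ^ (k+1) * aeval A f) := by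
      calc A ^ (k+1+1) * B = A * (A ^ (k+1) * B) := by rw [← mul_assoc, ← pow_succ']
        _ = A * (B * A^(k+1)) + ((k:F)+1) • (A * (A^k * aeval A f)) := by
            rw [ih', mul_add, mul_smul_comm]
        _ = (A * B) * A^(k+1) + ((k:F)+1) • (A^(k+1) * aeval A f) := by
            rw [← mul_assoc, ← mul_assoc, ← pow_succ']
        _ = (B * A) * A^(k+1) + aeval A f * A^(k+1) + ((k:F)+1) • (A^(k+1) * aeval A f) := by
            rw [hAB, add_mul]
        _ = B * A^(k+1+1) + A ^ (k+1) * aeval A f + ((k:F)+1) • (A ^ (k+1) * aeval A f) := by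
            rw [hCA, mul_assoc, ← pow_succ']
    rw [key]
    push_cast
    rw [add_smul, one_smul]
    module

/-- Key commutator identity: if `[A,B] = f(A)` then `[g(A), B] = g'(A) f(A)`. -/
lemma aeval_comm (A B : R) (f : F[X]) (h : A * B - B * A = aeval A f) (g : F[X]) :
    aeval A g * B - B * aeval A g = aeval A (derivative g * f) := by
  induction g using Polynomial.induction_on' with
  | add p q hp hq =>
    rw [derivative_add, add_mul, map_add, map_add, ← hp, ← hq, add_mul, mul_add]
    abel
  | monomial n a =>
    cases n with
    | zero =>
      simp [aeval_monomial, Algebra.commutes]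
    | succ k =>
      rw [aeval_monomial, derivative_monomial]
      simp only [Nat.add_sub_cancel]
      rw [map_mul, aeval_monomial]
      have h1 : algebraMap F R a * A ^ (k+1) * B - B * (algebraMap F R a * A ^ (k+1))
          = algebraMap F R a * (A ^ (k+1) * B - B * A ^ (k+1)) := by
        rw [mul_sub, ← mul_assoc, ← Algebra.commutes a B]
        simp [mul_assoc]
      rw [h1, pow_comm_aux A B f h k, Algebra.smul_def, map_mul]
      push_cast
      simp [mul_assoc]

end CommLemmas
open Polynomial

section Conj
variable {F R : Type*} [Field F] [Ring R] [Algebra F R]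

/-- Conjugation by a unit as an algebra equivalence. -/
def conjAlgEquiv (u : Rˣ) : R ≃ₐ[F] R where
  toFun x := ↑u⁻¹ * x * ↑u
  invFun x := ↑u * x * ↑u⁻¹
  left_inv x := by simp [mul_assoc, ← mul_assoc]
  right_inv x := by simp [mul_assoc, ← mul_assoc]
  map_mul' x y := by
    simp only [mul_assoc]
    rw [← mul_assoc (u:R), Units.mul_inv, one_mul]
  map_add' x y := by noncomm_ring
  commutes' r := by
    show (↑u⁻¹ : R) * algebraMap F R r * ↑u = algebraMap F R r
    rw [← Algebra.commutes r (↑u⁻¹ : R), mul_assoc, Units.inv_mul, mul_one]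

lemma conj_aeval (u : Rˣ) (a : R) (f : F[X]) :
    aeval ((↑u⁻¹ : R) * a * ↑u) f = ↑u⁻¹ * aeval a f * ↑u := by
  exact aeval_algHom_apply (conjAlgEquiv (F := F) u : R ≃ₐ[F] R) a f

end Conj

section Restrict
variable {F V : Type*} [Field F] [AddCommGroup V] [Module F V]

lemma restrict_aeval (A : Module.End F V) {W : Submodule F V}
    (hA : Set.MapsTo A W W) (f : F[X])
    (h : Set.MapsTo (aeval A f) W W) :
    LinearMap.restrict (aeval A f) h = aeval (LinearMap.restrict A hA) f := by
  have key : ∀ (g : F[X]) (x : W), ((aeval (LinearMap.restrict A hA) g x : W) : V)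
      = aeval A g x := by
    intro g
    induction g using Polynomial.induction_on' with
    | add p q hp hq => intro x; simp [hp, hq]
    | monomial n a =>
      intro x
      rw [aeval_monomial, aeval_monomial]
      have hmapsto : ∀ y ∈ W, (A ^ n) y ∈ W := by
        intro y hy
        induction n with
        | zero => simpa using hy
        | succ m ih => rw [pow_succ', Module.End.mul_apply]; exact hA ih
      have : (LinearMap.restrict A hA) ^ n = LinearMap.restrict (A ^ n) hmapsto :=
        Module.End.pow_restrict n hA
      simp only [Module.End.mul_apply, Module.algebraMap_end_apply, this]
      simp [LinearMap.restrict_apply]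
  ext x
  exact (key f x).symm

end Restrict

section CE
variable {F V : Type*} [Field F] [IsAlgClosed F] [AddCommGroup V] [Module F V]
  [FiniteDimensional F V]

/-- Common eigenvector for `A, B` with `[A,B] = f(A)`. -/
lemma exists_common_eigenvector [Nontrivial V]
    (hchar : ∀ d : ℕ, 0 < d → d ≤ Module.finrank F V → (d : F) ≠ 0)
    (A B : Module.End F V) (f : F[X]) (h : A * B - B * A = aeval A f) :
    ∃ v : V, v ≠ 0 ∧ ∃ a b : F, A v = a • v ∧ B v = b • v := by
  classical
  obtain ⟨α, hα⟩ := Module.End.exists_eigenvalue A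
  set C : Module.End F V := aeval A f with hCdef
  have hAC : Commute A C := by
    have := commute_aeval' A (X : F[X]) f
    simpa using this
  -- Step A :  f.eval α = 0
  have hfα : f.eval α = 0 := by
    set W := A.maxGenEigenspace α with hWdef
    have hW_ne : W ≠ ⊥ := by
      intro hbot
      apply hα
      have hle : A.eigenspace α ≤ W := (A.genEigenspace α).monotone le_top
      rw [hbot, le_bot_iff] at hle
      exact hle
    have hAW : Set.MapsTo A W W := Module.End.mapsTo_maxGenEigenspace_of_comm rfl α
    have hCW : Set.MapsTo C W W := Module.End.mapsTo_maxGenEigenspace_of_comm hAC α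
    have hBW : Set.MapsTo B W W := by
      intro v hv
      rw [SetLike.mem_coe, Module.End.mem_maxGenEigenspace] at hv ⊢
      obtain ⟨k, hk⟩ := hv
      refine ⟨k + 1, ?_⟩
      have hsub : A - α • 1 = aeval A (X - Polynomial.C α) := by
        rw [map_sub, aeval_X, aeval_C, Module.algebraMap_end_eq_smul_id]
        rfl
      have hgsub : (A - α • 1) ^ (k + 1) = aeval A ((X - Polynomial.C α) ^ (k + 1)) := by
        rw [map_pow, hsub]
      have hgsubk : (A - α • 1) ^ k = aeval A ((X - Polynomial.C α) ^ k) := by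
        rw [map_pow, hsub]
      have hcomm := aeval_comm A B f h ((X - Polynomial.C α) ^ (k + 1))
      have hderiv : derivative ((X - Polynomial.C α) ^ (k + 1))
          = (k + 1 : F[X]) * (X - Polynomial.C α) ^ k := by
        rw [derivative_pow, derivative_sub, derivative_X, derivative_C]
        simp
      have happ : ((A - α • 1) ^ (k + 1)) (B v)
          = B (((A - α • 1) ^ (k + 1)) v)
            + (aeval A ((k + 1 : F[X]) * (X - Polynomial.C α) ^ k * f)) v := by
        rw [hgsub]
        have := congrArg (fun (φ : Module.End F V) => φ v) hcomm
        simp only [LinearMap.sub_apply, Module.End.mul_apply] at this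
        rw [hderiv] at this
        rw [eq_add_of_sub_eq this]
        abel
      rw [happ]
      have h1 : ((A - α • 1) ^ (k + 1)) v = 0 := by
        rw [pow_succ', Module.End.mul_apply, hk, map_zero]
      have h2 : (aeval A ((k + 1 : F[X]) * (X - Polynomial.C α) ^ k * f)) v = 0 := by
        rw [mul_assoc, map_mul, map_mul, Module.End.mul_apply, Module.End.mul_apply]
        have hswap : (aeval A ((X - Polynomial.C α) ^ k)) ((aeval A f) v)
            = (aeval A f) (((A - α • 1) ^ k) v) := by
          rw [hgsubk]
          have hc := commute_aeval' A ((X - Polynomial.C α) ^ k) f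
          have := congrArg (fun (φ : Module.End F V) => φ v) hc.eq
          simpa only [Module.End.mul_apply] using this
        rw [hswap, hk, map_zero, map_zero]
      rw [h1, h2, map_zero, zero_add]
    -- restrictions
    set A₁ := A.restrict hAW
    set B₁ := B.restrict hBW
    set C₁ := C.restrict hCW
    have htr0 : LinearMap.trace F W C₁ = 0 := by
      have hCrw : C₁ = A₁ * B₁ - B₁ * A₁ := by
        ext x
        have heq : A (B (x : V)) - B (A (x : V)) = C (x : V) := by
          have := congrArg (fun (φ : Module.End F V) => φ (x : V)) h
          simpa only [LinearMap.sub_apply, Module.End.mul_apply] using this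
        simp only [C₁, A₁, B₁, LinearMap.sub_apply, Module.End.mul_apply,
          AddSubgroupClass.coe_sub, LinearMap.restrict_coe_apply]
        exact heq.symm
      rw [hCrw, map_sub, LinearMap.trace_mul_comm, sub_self]
    have hC₁ : C₁ = aeval A₁ f := restrict_aeval A hAW f hCW
    obtain ⟨g, hg⟩ := (X_sub_C_dvd_sub_C_eval (a := α) (p := f))
    have hnil : IsNilpotent (C₁ - algebraMap F (Module.End F W) (f.eval α)) := by
      have heq : C₁ - algebraMap F (Module.End F W) (f.eval α)
          = aeval A₁ (X - Polynomial.C α) * aeval A₁ g := by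
        rw [← map_mul, ← hg, map_sub, hC₁, aeval_C]
      rw [heq]
      have hXC : aeval A₁ (X - Polynomial.C α)
          = LinearMap.restrict (A - algebraMap F (Module.End F V) α)
            (Module.End.mapsTo_maxGenEigenspace_of_comm
              (Algebra.mul_sub_algebraMap_commutes A α) α) := by
        rw [map_sub, aeval_X, aeval_C]
        ext x
        simp [A₁, LinearMap.restrict_coe_apply, LinearMap.restrict_apply]
        rfl
      have hXnil : IsNilpotent (aeval A₁ (X - Polynomial.C α)) := by
        rw [hXC]
        exact Module.End.isNilpotent_restrict_maxGenEigenspace_sub_algebraMap A α _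
      exact (commute_aeval' A₁ (X - Polynomial.C α) g).isNilpotent_mul_right hXnil
    have htr : LinearMap.trace F W C₁ = f.eval α * (Module.finrank F W : F) := by
      have := LinearMap.trace_comp_eq_mul_of_commute_of_isNilpotent (f.eval α)
        (Commute.one_left C₁) hnil
      rw [← Module.End.mul_eq_comp, one_mul, LinearMap.trace_one] at this
      exact this
    have hpos : 0 < Module.finrank F W := by
      haveI : Nontrivial W := Submodule.nontrivial_iff_ne_bot.mpr hW_ne
      exact Module.finrank_pos
    have hle : Module.finrank F W ≤ Module.finrank F V := Submodule.finrank_le W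
    have hne : ((Module.finrank F W : ℕ) : F) ≠ 0 := hchar _ hpos hle
    rw [htr0] at htr
    exact by
      rcases mul_eq_zero.mp htr.symm with h' | h'
      · exact h'
      · exact absurd h' hne
  -- Step B : work inside ker C
  set U := LinearMap.ker C with hUdef
  have hU_ne : U ≠ ⊥ := by
    obtain ⟨v₀, hv₀⟩ := hα.exists_hasEigenvector
    have : C v₀ = 0 := by
      rw [hCdef, Module.End.aeval_apply_of_hasEigenvector hv₀, hfα, zero_smul]
    intro hbot
    have : v₀ ∈ (⊥ : Submodule F V) := hbot ▸ (LinearMap.mem_ker.mpr this)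
    exact hv₀.right (by simpa using this)
  have hAU : Set.MapsTo A U U := by
    intro x hx
    rw [SetLike.mem_coe, LinearMap.mem_ker] at hx ⊢
    have := congrArg (fun (φ : Module.End F V) => φ x) hAC.eq
    simp only [Module.End.mul_apply] at this
    rw [← this, hx, map_zero]
  have hBU : Set.MapsTo B U U := by
    intro x hx
    rw [SetLike.mem_coe, LinearMap.mem_ker] at hx ⊢
    rw [hCdef] at hx ⊢
    have hcomm := aeval_comm A B f h f
    have heq := congrArg (fun (φ : Module.End F V) => φ x) hcomm
    simp only [LinearMap.sub_apply, Module.End.mul_apply] at heq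
    have hrhs : (aeval A (derivative f * f)) x = 0 := by
      rw [map_mul, Module.End.mul_apply, hx, map_zero]
    have h6 : (aeval A f) (B x) = B ((aeval A f) x) := sub_eq_zero.mp (heq.trans hrhs)
    rw [h6, hx, map_zero]
  -- restrict A and B to U; they commute there
  haveI : Nontrivial U := Submodule.nontrivial_iff_ne_bot.mpr hU_ne
  set A₂ : Module.End F U := A.restrict hAU with hA₂
  set B₂ : Module.End F U := B.restrict hBU with hB₂
  have hcomm2 : Commute A₂ B₂ := by
    have : A₂ * B₂ - B₂ * A₂ = 0 := by
      ext x
      have hx : (aeval A f) (x : V) = 0 := x.2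
      have heq := congrArg (fun (φ : Module.End F V) => φ (x : V)) h
      simp only [LinearMap.sub_apply, Module.End.mul_apply] at heq
      rw [hCdef] at heq
      simp only [A₂, B₂, LinearMap.sub_apply, Module.End.mul_apply,
        AddSubgroupClass.coe_sub, LinearMap.restrict_coe_apply, LinearMap.zero_apply,
        ZeroMemClass.coe_zero]
      change A (B (x : V)) - B (A (x : V)) = 0
      rw [heq, hx]
    have := sub_eq_zero.mp this
    exact this
  obtain ⟨β, hβ⟩ := Module.End.exists_eigenvalue A₂
  set E := A₂.eigenspace β with hE
  have hE_ne : E ≠ ⊥ := hβ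
  haveI : Nontrivial E := Submodule.nontrivial_iff_ne_bot.mpr hE_ne
  have hBE : Set.MapsTo B₂ E E := by
    intro x hx
    rw [SetLike.mem_coe, Module.End.mem_eigenspace_iff] at hx ⊢
    rw [← Module.End.mul_apply, hcomm2.eq, Module.End.mul_apply, hx, map_smul]
  set B₃ : Module.End F E := B₂.restrict hBE with hB₃
  obtain ⟨γ, hγ⟩ := Module.End.exists_eigenvalue B₃
  obtain ⟨u, hu⟩ := hγ.exists_hasEigenvector
  refine ⟨((u : U) : V), ?_, β, γ, ?_, ?_⟩
  · intro h0
    apply hu.right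
    exact Subtype.ext (Subtype.ext h0)
  · have hmem : A₂ (u : U) = β • (u : U) := Module.End.mem_eigenspace_iff.mp u.2
    have := congrArg (fun (y : U) => (y : V)) hmem
    exact this
  · have h3 : B₃ u = γ • u := Module.End.mem_eigenspace_iff.mp hu.left
    have h2 : B₂ (u : U) = γ • (u : U) := by
      have := congrArg (fun (y : E) => (y : U)) h3
      exact this
    have := congrArg (fun (y : U) => (y : V)) h2
    exact this

end CE

section MatrixCE
variable {F : Type*} [Field F] [IsAlgClosed F] {m : ℕ}

lemma matrix_CE (hchar : ∀ d : ℕ, 0 < d → d ≤ m + 1 → (d : F) ≠ 0)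
    (A B : Matrix (Fin (m+1)) (Fin (m+1)) F) (f : F[X])
    (h : A * B - B * A = aeval A f) :
    ∃ v : Fin (m+1) → F, v ≠ 0 ∧ ∃ a b : F, A.mulVec v = a • v ∧ B.mulVec v = b • v := by
  classical
  let φ := Matrix.toLinAlgEquiv' (R := F) (n := Fin (m+1))
  have hrel : (φ A) * (φ B) - (φ B) * (φ A) = aeval (φ A) f := by
    rw [← map_mul, ← map_mul, ← map_sub, h, aeval_algHom_apply]
  have hchar' : ∀ d : ℕ, 0 < d → d ≤ Module.finrank F (Fin (m+1) → F) → (d : F) ≠ 0 := by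
    intro d hd hle
    refine hchar d hd ?_
    rwa [Module.finrank_pi, Fintype.card_fin] at hle
  obtain ⟨v, hv, a, b, hA, hB⟩ := exists_common_eigenvector hchar' (φ A) (φ B) f hrel
  refine ⟨v, hv, a, b, ?_, ?_⟩
  · rw [← hA]; rfl
  · rw [← hB]; rfl

lemma exists_GL_col (v : Fin (m+1) → F) (hv : v ≠ 0) :
    ∃ P : GL (Fin (m+1)) F, (P : Matrix (Fin (m+1)) (Fin (m+1)) F).mulVec (Pi.single 0 1) = v := by
  classical
  obtain ⟨N, hN⟩ := Submodule.exists_isCompl (Submodule.span F {v})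
  have hrank : Module.finrank F N = m := by
    have h1 := Submodule.finrank_add_eq_of_isCompl hN
    rw [finrank_span_singleton hv, Module.finrank_pi, Fintype.card_fin] at h1
    omega
  let bN : Module.Basis (Fin m) F N := Module.finBasisOfFinrankEq F N hrank
  have hli : ∀ (c : F), ∀ x ∈ N, c • v + x = 0 → c = 0 := by
    intro c x hx hcx
    by_contra hc
    have hxv : x = -(c • v) := by linear_combination (norm := module) hcx
    have hmem : c • v ∈ N := by
      rw [← neg_neg (c • v), ← hxv]; exact neg_mem hx
    have hmem2 : c • v ∈ Submodule.span F {v} :=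
      Submodule.smul_mem _ c (Submodule.mem_span_singleton_self v)
    have := Submodule.disjoint_def.mp hN.disjoint _ hmem2 hmem
    rcases smul_eq_zero.mp this with h' | h'
    · exact hc h'
    · exact hv h'
  have hsp : ∀ z : Fin (m+1) → F, ∃ c : F, z + c • v ∈ N := by
    intro z
    have hz : z ∈ Submodule.span F {v} ⊔ N := by
      rw [hN.sup_eq_top]; trivial
    obtain ⟨y, hy, n, hn, hzyn⟩ := Submodule.mem_sup.mp hz
    obtain ⟨a, ha⟩ := Submodule.mem_span_singleton.mp hy
    refine ⟨-a, ?_⟩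
    have : z + (-a) • v = n := by
      rw [← hzyn, ← ha]; module
    rwa [this]
  let b : Module.Basis (Fin (m+1)) F (Fin (m+1) → F) := Module.Basis.mkFinCons v bN hli hsp
  have hb0 : b 0 = v := by
    have := Module.Basis.coe_mkFinCons v bN hli hsp
    rw [show b = Module.Basis.mkFinCons v bN hli hsp from rfl]
    rw [this]
    exact Fin.cons_zero _ _
  haveI : Invertible ((Pi.basisFun F (Fin (m+1))).toMatrix ⇑b) :=
    (Pi.basisFun F (Fin (m+1))).invertibleToMatrix b
  refine ⟨unitOfInvertible ((Pi.basisFun F (Fin (m+1))).toMatrix ⇑b), ?_⟩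
  rw [show ((unitOfInvertible ((Pi.basisFun F (Fin (m+1))).toMatrix ⇑b) :
      GL (Fin (m+1)) F) : Matrix (Fin (m+1)) (Fin (m+1)) F)
      = (Pi.basisFun F (Fin (m+1))).toMatrix ⇑b from rfl]
  rw [Matrix.mulVec_single]
  funext i
  simp [Module.Basis.toMatrix_apply, Pi.basisFun_repr, hb0]

end MatrixCE

section Blocks
variable {F : Type*} [Field F] {m : ℕ}

/-- Matrices over `Fin (m+1)` whose first column vanishes below the corner. -/
def ZC (M : Matrix (Fin (m+1)) (Fin (m+1)) F) : Prop := ∀ i : Fin m, M i.succ 0 = 0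

/-- Lower-right `m × m` block. -/
def blk (M : Matrix (Fin (m+1)) (Fin (m+1)) F) : Matrix (Fin m) (Fin m) F :=
  M.submatrix Fin.succ Fin.succ

lemma blk_apply (M : Matrix (Fin (m+1)) (Fin (m+1)) F) (i j : Fin m) :
    blk M i j = M i.succ j.succ := rfl

lemma ZC_mul {M N : Matrix (Fin (m+1)) (Fin (m+1)) F} (hM : ZC M) (hN : ZC N) :
    ZC (M * N) := by
  intro i
  rw [Matrix.mul_apply, Fin.sum_univ_succ, hM i, zero_mul, zero_add]
  exact Finset.sum_eq_zero fun k _ => by rw [hN k, mul_zero]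

lemma ZC_one : ZC (1 : Matrix (Fin (m+1)) (Fin (m+1)) F) := by
  intro i
  simp [Matrix.one_apply, Fin.succ_ne_zero i]

lemma ZC_pow {M : Matrix (Fin (m+1)) (Fin (m+1)) F} (hM : ZC M) (k : ℕ) : ZC (M ^ k) := by
  induction k with
  | zero => simpa [pow_zero] using ZC_one
  | succ k ih => rw [pow_succ]; exact ZC_mul ih hM

lemma ZC_smul {M : Matrix (Fin (m+1)) (Fin (m+1)) F} (hM : ZC M) (c : F) : ZC (c • M) := by
  intro i; simp [hM i]

lemma ZC_sum {s : Finset ℕ} {Ms : ℕ → Matrix (Fin (m+1)) (Fin (m+1)) F}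
    (h : ∀ k ∈ s, ZC (Ms k)) : ZC (∑ k ∈ s, Ms k) := by
  classical
  induction s using Finset.induction_on with
  | empty => intro i; simp
  | insert _ _ hnotmem ih =>
    rename_i a s'
    intro i
    rw [Finset.sum_insert hnotmem]
    have h1 := h a (Finset.mem_insert_self a s')
    have h2 := ih (fun k hk => h k (Finset.mem_insert_of_mem hk))
    simp [Matrix.add_apply, h1 i, h2 i]

lemma blk_mul {M N : Matrix (Fin (m+1)) (Fin (m+1)) F} (hM : ZC M) :
    blk (M * N) = blk M * blk N := by
  ext i j
  rw [blk_apply, Matrix.mul_apply, Matrix.mul_apply, Fin.sum_univ_succ, hM i, zero_mul, zero_add]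
  rfl

lemma blk_one : blk (1 : Matrix (Fin (m+1)) (Fin (m+1)) F) = 1 := by
  ext i j
  rw [blk_apply]
  simp [Matrix.one_apply, Fin.succ_inj]

lemma blk_add (M N : Matrix (Fin (m+1)) (Fin (m+1)) F) : blk (M + N) = blk M + blk N := rfl

lemma blk_sub (M N : Matrix (Fin (m+1)) (Fin (m+1)) F) : blk (M - N) = blk M - blk N := rfl

lemma blk_smul (c : F) (M : Matrix (Fin (m+1)) (Fin (m+1)) F) : blk (c • M) = c • blk M := rfl

lemma blk_pow {M : Matrix (Fin (m+1)) (Fin (m+1)) F} (hM : ZC M) (k : ℕ) :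
    blk (M ^ k) = blk M ^ k := by
  induction k with
  | zero => rw [pow_zero, pow_zero, blk_one]
  | succ k ih => rw [pow_succ, pow_succ, blk_mul (ZC_pow hM k), ih]

lemma ZC_aeval {M : Matrix (Fin (m+1)) (Fin (m+1)) F} (hM : ZC M) (f : F[X]) :
    ZC (aeval M f) := by
  rw [aeval_eq_sum_range]
  exact ZC_sum (fun k _ => ZC_smul (ZC_pow hM k) _)

lemma blk_aeval {M : Matrix (Fin (m+1)) (Fin (m+1)) F} (hM : ZC M) (f : F[X]) :
    blk (aeval M f) = aeval (blk M) f := by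
  rw [aeval_eq_sum_range, aeval_eq_sum_range]
  have hsum : ∀ (s : Finset ℕ) (Ms : ℕ → Matrix (Fin (m+1)) (Fin (m+1)) F),
      blk (∑ i ∈ s, Ms i) = ∑ i ∈ s, blk (Ms i) := by
    intro s Ms
    classical
    induction s using Finset.induction_on with
    | empty => ext i j; simp [blk_apply]
    | insert _ _ hnotmem ih =>
      rename_i a s'
      rw [Finset.sum_insert hnotmem, Finset.sum_insert hnotmem, blk_add, ih]
  rw [hsum]
  refine Finset.sum_congr rfl fun k _ => ?_
  rw [blk_smul, blk_pow hM]

/-- Extend an `m × m` matrix to an `(m+1) × (m+1)` matrix with a `1` in the corner. -/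
def ext1 (X : Matrix (Fin m) (Fin m) F) : Matrix (Fin (m+1)) (Fin (m+1)) F :=
  Matrix.of (Fin.cons (Fin.cons (1 : F) (0 : Fin m → F)) (fun i => Fin.cons (0 : F) (X i)))

@[simp] lemma ext1_zero_zero (X : Matrix (Fin m) (Fin m) F) : ext1 X 0 0 = 1 := rfl
@[simp] lemma ext1_zero_succ (X : Matrix (Fin m) (Fin m) F) (j : Fin m) :
    ext1 X 0 j.succ = 0 := by
  simp [ext1]
@[simp] lemma ext1_succ_zero (X : Matrix (Fin m) (Fin m) F) (i : Fin m) :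
    ext1 X i.succ 0 = 0 := by
  simp [ext1]
@[simp] lemma ext1_succ_succ (X : Matrix (Fin m) (Fin m) F) (i j : Fin m) :
    ext1 X i.succ j.succ = X i j := by
  simp [ext1]

lemma ext1_mul (X Y : Matrix (Fin m) (Fin m) F) : ext1 X * ext1 Y = ext1 (X * Y) := by
  ext i j
  rw [Matrix.mul_apply, Fin.sum_univ_succ]
  refine Fin.cases ?_ (fun i' => ?_) i <;> refine Fin.cases ?_ (fun j' => ?_) j
  · simp
  · simp
  · simp
  · simp [Matrix.mul_apply]

lemma ext1_one : ext1 (1 : Matrix (Fin m) (Fin m) F) = 1 := by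
  ext i j
  refine Fin.cases ?_ (fun i' => ?_) i <;> refine Fin.cases ?_ (fun j' => ?_) j <;>
    simp [Matrix.one_apply, Fin.succ_ne_zero, (Fin.succ_ne_zero _).symm, Fin.succ_inj]

lemma entry_succ_zero {M : Matrix (Fin (m+1)) (Fin (m+1)) F} (hM : ZC M)
    (X Y : Matrix (Fin m) (Fin m) F) (i : Fin m) :
    (ext1 X * M * ext1 Y) i.succ 0 = 0 := by
  rw [Matrix.mul_apply, Fin.sum_univ_succ]
  have hcol : (ext1 X * M) i.succ 0 = 0 := by
    rw [Matrix.mul_apply, Fin.sum_univ_succ]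
    simp [hM _]
  simp [hcol, Fin.succ_ne_zero]

lemma entry_succ_succ {M : Matrix (Fin (m+1)) (Fin (m+1)) F}
    (X Y : Matrix (Fin m) (Fin m) F) (i j : Fin m) :
    (ext1 X * M * ext1 Y) i.succ j.succ = (X * blk M * Y) i j := by
  rw [Matrix.mul_apply, Fin.sum_univ_succ, Matrix.mul_apply (M := X * blk M)]
  have hrow : ∀ k : Fin m, (ext1 X * M) i.succ k.succ = (X * blk M) i k := by
    intro k
    rw [Matrix.mul_apply, Fin.sum_univ_succ, Matrix.mul_apply]
    simp [blk_apply]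
  simp [hrow, Fin.succ_ne_zero]

lemma tri_step {M : Matrix (Fin (m+1)) (Fin (m+1)) F} (hM : ZC M)
    {X Y : Matrix (Fin m) (Fin m) F}
    (h : (X * blk M * Y).BlockTriangular id) :
    (ext1 X * M * ext1 Y).BlockTriangular id := by
  intro i j hij
  simp only [id] at hij
  rcases Fin.eq_zero_or_eq_succ i with rfl | ⟨i', rfl⟩
  · exact absurd hij (Fin.not_lt_zero j)
  · rcases Fin.eq_zero_or_eq_succ j with rfl | ⟨j', rfl⟩
    · exact entry_succ_zero hM X Y i'
    · rw [entry_succ_succ]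
      exact h (by simpa using (Fin.succ_lt_succ_iff.mp hij))

end Blocks

section Main
variable {F : Type*} [Field F] [IsAlgClosed F]

theorem tri : ∀ (m : ℕ), (∀ d : ℕ, 0 < d → d ≤ m → (d : F) ≠ 0) →
    ∀ (A B : Matrix (Fin m) (Fin m) F) (f : F[X]), A * B - B * A = aeval A f →
    ∃ P : GL (Fin m) F,
      (((P⁻¹ : GL (Fin m) F) : Matrix (Fin m) (Fin m) F) * A *
        (P : Matrix (Fin m) (Fin m) F)).BlockTriangular id ∧
      (((P⁻¹ : GL (Fin m) F) : Matrix (Fin m) (Fin m) F) * B *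
        (P : Matrix (Fin m) (Fin m) F)).BlockTriangular id := by
  intro m
  induction m with
  | zero =>
    intro _ A B f _
    refine ⟨1, ?_, ?_⟩ <;> exact fun i _ _ => i.elim0
  | succ m ih =>
    intro hchar A B f h
    obtain ⟨v, hv, a, b, hAv, hBv⟩ := matrix_CE hchar A B f h
    obtain ⟨P₁, hP₁⟩ := exists_GL_col v hv
    set Pm : Matrix (Fin (m+1)) (Fin (m+1)) F := ↑P₁ with hPm
    set Qi : Matrix (Fin (m+1)) (Fin (m+1)) F := ↑P₁⁻¹ with hQi
    have hPiP : Qi * Pm = 1 := P₁.inv_mul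
    have hPPi : Pm * Qi = 1 := P₁.mul_inv
    set A₂ : Matrix (Fin (m+1)) (Fin (m+1)) F := Qi * A * Pm with hA₂
    set B₂ : Matrix (Fin (m+1)) (Fin (m+1)) F := Qi * B * Pm with hB₂
    -- the conjugated relation
    have hrel₂ : A₂ * B₂ - B₂ * A₂ = aeval A₂ f := by
      have h1 : A₂ * B₂ = Qi * (A * B) * Pm := by
        rw [hA₂, hB₂]
        calc Qi * A * Pm * (Qi * B * Pm) = Qi * A * (Pm * Qi) * B * Pm := by
              simp only [Matrix.mul_assoc]
          _ = Qi * (A * B) * Pm := by rw [hPPi, Matrix.mul_one]; simp only [Matrix.mul_assoc]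
      have h2 : B₂ * A₂ = Qi * (B * A) * Pm := by
        rw [hA₂, hB₂]
        calc Qi * B * Pm * (Qi * A * Pm) = Qi * B * (Pm * Qi) * A * Pm := by
              simp only [Matrix.mul_assoc]
          _ = Qi * (B * A) * Pm := by rw [hPPi, Matrix.mul_one]; simp only [Matrix.mul_assoc]
      have h3 : aeval A₂ f = Qi * aeval A f * Pm := conj_aeval P₁ A f
      rw [h1, h2, h3, ← h]
      simp only [Matrix.mul_sub, Matrix.sub_mul]
    -- the conjugated matrices have zero first column below the corner
    have hA₂v : A₂.mulVec (Pi.single 0 1) = a • (Pi.single 0 1 : Fin (m+1) → F) := by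
      rw [hA₂, ← Matrix.mulVec_mulVec, ← Matrix.mulVec_mulVec, hP₁, hAv,
        Matrix.mulVec_smul, ← hP₁, Matrix.mulVec_mulVec, hPiP, Matrix.one_mulVec]
    have hB₂v : B₂.mulVec (Pi.single 0 1) = b • (Pi.single 0 1 : Fin (m+1) → F) := by
      rw [hB₂, ← Matrix.mulVec_mulVec, ← Matrix.mulVec_mulVec, hP₁, hBv,
        Matrix.mulVec_smul, ← hP₁, Matrix.mulVec_mulVec, hPiP, Matrix.one_mulVec]
    have hZA : ZC A₂ := by
      intro i
      have := congrFun hA₂v i.succ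
      rw [Matrix.mulVec_single] at this
      simpa [Pi.single_eq_of_ne (Fin.succ_ne_zero i)] using this
    have hZB : ZC B₂ := by
      intro i
      have := congrFun hB₂v i.succ
      rw [Matrix.mulVec_single] at this
      simpa [Pi.single_eq_of_ne (Fin.succ_ne_zero i)] using this
    -- relation for the blocks
    have hrelblk : blk A₂ * blk B₂ - blk B₂ * blk A₂ = aeval (blk A₂) f := by
      rw [← blk_mul hZA, ← blk_mul hZB, ← blk_sub, hrel₂, blk_aeval hZA]
    obtain ⟨P', hP'A, hP'B⟩ := ih (fun d hd hle => hchar d hd (hle.trans (Nat.le_succ m)))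
      (blk A₂) (blk B₂) f hrelblk
    -- assemble
    refine ⟨P₁ * (⟨ext1 ↑P', ext1 ↑P'⁻¹, by rw [ext1_mul, Units.mul_inv, ext1_one],
      by rw [ext1_mul, Units.inv_mul, ext1_one]⟩ : GL (Fin (m+1)) F), ?_, ?_⟩
    all_goals {
      rw [mul_inv_rev, Units.val_mul, Units.val_mul]
      show Matrix.BlockTriangular (ext1 ↑P'⁻¹ * Qi * _ * (Pm * ext1 ↑P')) id
      first
        | (have : ext1 (↑P'⁻¹ : Matrix (Fin m) (Fin m) F) * Qi * A * (Pm * ext1 ↑P')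
              = ext1 ↑P'⁻¹ * A₂ * ext1 ↑P' := by
            rw [hA₂]; simp only [Matrix.mul_assoc]
           rw [this]; exact tri_step hZA hP'A)
        | (have : ext1 (↑P'⁻¹ : Matrix (Fin m) (Fin m) F) * Qi * B * (Pm * ext1 ↑P')
              = ext1 ↑P'⁻¹ * B₂ * ext1 ↑P' := by
            rw [hB₂]; simp only [Matrix.mul_assoc]
           rw [this]; exact tri_step hZB hP'B)
    }

end Main

/-- If `K` is a field of characteristic `0` or greater than `n` and
`A, B ∈ Mₙ(K)` satisfy `AB - BA = f(A)` for a polynomial `f` over `K`, then `A` and `B`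
are simultaneously triangularizable over the algebraic closure of `K`. -/
theorem stmt1 (n : ℕ) (K : Type*) [Field K]
    (hchar : ringChar K = 0 ∨ n < ringChar K)
    (A B : Matrix (Fin n) (Fin n) K) (f : Polynomial K)
    (h : A * B - B * A = Polynomial.aeval A f) :
    ∃ P : GL (Fin n) (AlgebraicClosure K),
      (((P⁻¹ : GL (Fin n) (AlgebraicClosure K)) : Matrix (Fin n) (Fin n) (AlgebraicClosure K)) *
          A.map (algebraMap K (AlgebraicClosure K)) *
          (P : Matrix (Fin n) (Fin n) (AlgebraicClosure K))).BlockTriangular id ∧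
      (((P⁻¹ : GL (Fin n) (AlgebraicClosure K)) : Matrix (Fin n) (Fin n) (AlgebraicClosure K)) *
          B.map (algebraMap K (AlgebraicClosure K)) *
          (P : Matrix (Fin n) (Fin n) (AlgebraicClosure K))).BlockTriangular id := by
  classical
  set F := AlgebraicClosure K
  have hchar' : ∀ d : ℕ, 0 < d → d ≤ n → (d : F) ≠ 0 := by
    intro d hd hdn h0
    haveI : CharP K (ringChar K) := ringChar.charP K
    haveI : CharP F (ringChar K) :=
      charP_of_injective_algebraMap (algebraMap K F).injective _
    have hdvd : ringChar K ∣ d := (CharP.cast_eq_zero_iff F (ringChar K) d).mp h0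
    rcases hchar with h0' | hlt
    · rw [h0'] at hdvd
      exact absurd (Nat.eq_zero_of_zero_dvd hdvd) (Nat.pos_iff_ne_zero.mp hd)
    · have := Nat.le_of_dvd hd hdvd
      omega
  set φ : Matrix (Fin n) (Fin n) K →+* Matrix (Fin n) (Fin n) F :=
    (algebraMap K F).mapMatrix with hφ
  have hφA : A.map (algebraMap K F) = φ A := rfl
  have hφB : B.map (algebraMap K F) = φ B := rfl
  have hcompat : φ.comp (algebraMap K (Matrix (Fin n) (Fin n) K))
      = (algebraMap F (Matrix (Fin n) (Fin n) F)).comp (algebraMap K F) := by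
    ext a i j
    simp only [RingHom.comp_apply, hφ, RingHom.mapMatrix_apply, Matrix.map_apply,
      Matrix.algebraMap_matrix_apply]
    split <;> simp
  have hrel : φ A * φ B - φ B * φ A = aeval (φ A) (f.map (algebraMap K F)) := by
    rw [← map_mul, ← map_mul, ← map_sub, h]
    rw [aeval_def, aeval_def, eval₂_map, ← hcompat, Polynomial.hom_eval₂]
  obtain ⟨P, h1, h2⟩ := tri n hchar' (φ A) (φ B) (f.map (algebraMap K F)) hrel
  exact ⟨P, by rw [hφA]; exact h1, by rw [hφB]; exact h2⟩
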